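/- arXiv:2106.06932 — 2 statements merged into one kernel-verified Lean document; each statement's English description precedes it below -/
import Mathlib

section
/- (Stationary distribution derivative.) The map θ ↦ d_θ is differentiable, and its Jacobian Υ ∈ ℝ^{n × (S×A)}, with entries Υ_{i,(s,a)} = ∂d_θ(s,a)/∂θ_i, is given by Υ = H_θ Δ(Ξᵀ d_{S,θ}) Ψ_θ⁻¹. -/
open Matrix

noncomputable section

variable {S A : Type*} [Fintype S] [Fintype A] [DecidableEq S] [DecidableEq A]
  [Nonempty S] [Nonempty A]

/-- A policy: nonnegative entries, and for each state the action probabilities sum to one. -/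
def IsPolicy (x : S × A → ℝ) : Prop :=
  (∀ p, 0 ≤ x p) ∧ ∀ s : S, ∑ a : A, x (s, a) = 1

/-- A row-stochastic transition matrix. -/
def IsStochasticMat (P : Matrix (S × A) S ℝ) : Prop :=
  (∀ p s, 0 ≤ P p s) ∧ ∀ p, ∑ s : S, P p s = 1

/-- A probability vector on states. -/
def IsProbVec (μ : S → ℝ) : Prop :=
  (∀ s, 0 ≤ μ s) ∧ ∑ s : S, μ s = 1

/-- The block policy matrix `Π(x) ∈ ℝ^{S × (S×A)}`. -/
def piMat (x : S × A → ℝ) : Matrix S (S × A) ℝ :=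
  Matrix.of fun s p => if p.1 = s then x p else 0

/-- The action-marginalization matrix `Ξ ∈ ℝ^{S × (S×A)}`. -/
def xiMat : Matrix S (S × A) ℝ :=
  Matrix.of fun s p => if p.1 = s then (1 : ℝ) else 0

/-- `Ψ(x) = I - γ P Π(x)`. -/
def psiMat (P : Matrix (S × A) S ℝ) (γ : ℝ) (x : S × A → ℝ) :
    Matrix (S × A) (S × A) ℝ :=
  1 - γ • (P * piMat x)

/-- The discounted state-action occupancy `d(x) = (1-γ)(Ψ(x)ᵀ)⁻¹ Π(x)ᵀ μ0`. -/
def dOcc (P : Matrix (S × A) S ℝ) (γ : ℝ) (μ0 : S → ℝ) (x : S × A → ℝ) :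
    S × A → ℝ :=
  (1 - γ) • (((psiMat P γ x)ᵀ)⁻¹ *ᵥ ((piMat x)ᵀ *ᵥ μ0))

attribute [local instance] Matrix.linftyOpNormedAddCommGroup Matrix.linftyOpNormedSpace
  Matrix.linftyOpNormedRing Matrix.linftyOpNormedAlgebra

lemma nnnorm_le_one_of_rows {m n : Type*} [Fintype m] [Fintype n] (B : Matrix m n ℝ)
    (h0 : ∀ i j, 0 ≤ B i j) (h1 : ∀ i, ∑ j, B i j = 1) : ‖B‖ ≤ 1 := by
  rw [Matrix.linfty_opNorm_def]
  rw [show (1:ℝ) = ((1:NNReal):ℝ) by norm_num]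
  rw [NNReal.coe_le_coe]
  refine Finset.sup_le fun i _ => ?_
  rw [← NNReal.coe_le_coe, NNReal.coe_sum, NNReal.coe_one]
  refine le_of_eq ?_
  calc ∑ j, (‖B i j‖₊ : ℝ) = ∑ j, B i j := by
        refine Finset.sum_congr rfl fun j _ => ?_
        rw [coe_nnnorm, Real.norm_eq_abs, abs_of_nonneg (h0 i j)]
    _ = 1 := h1 i

lemma piMat_row_sum {x : S × A → ℝ} (hx : IsPolicy x) (s : S) :
    ∑ p : S × A, piMat x s p = 1 := by
  rw [Fintype.sum_prod_type]
  have h1 : ∀ s' : S, ∑ a : A, piMat x s (s', a) = if s' = s then 1 else 0 := by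
    intro s'
    by_cases h : s' = s
    · subst h; simpa [piMat] using hx.2 s'
    · simp [piMat, h]
  simp [h1]

lemma isUnit_psiMat {P : Matrix (S × A) S ℝ} (hP : IsStochasticMat P)
    {γ : ℝ} (hγ0 : 0 ≤ γ) (hγ1 : γ < 1) {x : S × A → ℝ} (hx : IsPolicy x) :
    IsUnit (psiMat P γ x) := by
  have hPn : ‖P‖ ≤ 1 := nnnorm_le_one_of_rows P hP.1 hP.2
  have hπn : ‖piMat x‖ ≤ 1 := by
    refine nnnorm_le_one_of_rows _ ?_ (piMat_row_sum hx)
    intro s p; simp only [piMat, Matrix.of_apply]; split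
    · exact hx.1 p
    · exact le_refl _
  have hn : ‖γ • (P * piMat x)‖ < 1 := by
    rw [norm_smul, Real.norm_eq_abs, abs_of_nonneg hγ0]
    calc γ * ‖P * piMat x‖ ≤ γ * 1 := by
          refine mul_le_mul_of_nonneg_left ?_ hγ0
          calc ‖P * piMat x‖ ≤ ‖P‖ * ‖piMat x‖ := Matrix.linfty_opNorm_mul P _
            _ ≤ 1 := by nlinarith [norm_nonneg (piMat x)]
      _ < 1 := by linarith
  exact ⟨Units.oneSub _ hn, rfl⟩

set_option linter.unusedSectionVars false

lemma piMatT_mulVec (x : S × A → ℝ) (v : S → ℝ) (p : S × A) :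
    ((piMat x)ᵀ *ᵥ v) p = x p * v p.1 := by
  simp only [mulVec, dotProduct, transpose_apply, piMat, Matrix.of_apply, ite_mul, zero_mul]
  rw [Finset.sum_ite_eq Finset.univ p.1 (fun s' => x p * v s')]
  simp

lemma PpiMatT_mulVec (P : Matrix (S × A) S ℝ) (x : S × A → ℝ) (w : S × A → ℝ) (p : S × A) :
    ((P * piMat x)ᵀ *ᵥ w) p = x p * ∑ q, P q p.1 * w q := by
  simp only [mulVec, dotProduct, transpose_apply, mul_apply, piMat, Matrix.of_apply,
    mul_ite, mul_zero]
  rw [Finset.mul_sum]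
  refine Finset.sum_congr rfl fun q _ => ?_
  rw [Finset.sum_ite_eq Finset.univ p.1 (fun s' => P q s' * x p)]
  simp; ring

lemma xiMat_mulVec (w : S × A → ℝ) (s : S) :
    (xiMat *ᵥ w) s = ∑ a : A, w (s, a) := by
  simp only [mulVec, dotProduct, xiMat, Matrix.of_apply, ite_mul, one_mul, zero_mul]
  rw [Fintype.sum_prod_type]
  have h1 : ∀ s' : S, ∑ a : A, (if (s', a).1 = s then w (s', a) else 0)
      = if s' = s then ∑ a : A, w (s', a) else 0 := by
    intro s'; by_cases h : s' = s <;> simp [h]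
  rw [Finset.sum_congr rfl fun s' _ => h1 s', Finset.sum_ite_eq' Finset.univ s]
  simp

lemma xiMatT_mulVec (v : S → ℝ) (p : S × A) :
    (xiMatᵀ *ᵥ v) p = v p.1 := by
  simp only [mulVec, dotProduct, transpose_apply, xiMat, Matrix.of_apply, ite_mul, one_mul,
    zero_mul]
  rw [Finset.sum_ite_eq Finset.univ p.1 v]
  simp

section bal
variable {P : Matrix (S × A) S ℝ} (hP : IsStochasticMat P)
    {γ : ℝ} (hγ0 : 0 ≤ γ) (hγ1 : γ < 1) {μ0 : S → ℝ}
    {x : S × A → ℝ} (hx : IsPolicy x)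

include hP hγ0 hγ1 hx

lemma balance :
    (psiMat P γ x)ᵀ *ᵥ dOcc P γ μ0 x = (1 - γ) • ((piMat x)ᵀ *ᵥ μ0) := by
  have hdet : IsUnit ((psiMat P γ x)ᵀ).det := by
    rw [Matrix.det_transpose]
    exact (Matrix.isUnit_iff_isUnit_det _).1 (isUnit_psiMat hP hγ0 hγ1 hx)
  rw [dOcc, Matrix.mulVec_smul, Matrix.mulVec_mulVec, Matrix.mul_nonsing_inv _ hdet,
    Matrix.one_mulVec]

lemma dOcc_entry (p : S × A) :
    dOcc P γ μ0 x p
      = x p * ((1 - γ) * μ0 p.1 + γ * ∑ q, P q p.1 * dOcc P γ μ0 x q) := by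
  have hb := congrFun (balance hP hγ0 hγ1 (μ0 := μ0) hx) p
  have hexp : ((psiMat P γ x)ᵀ *ᵥ dOcc P γ μ0 x) p
      = dOcc P γ μ0 x p - γ * (x p * ∑ q, P q p.1 * dOcc P γ μ0 x q) := by
    rw [psiMat, Matrix.transpose_sub, Matrix.transpose_one, Matrix.sub_mulVec,
      Matrix.one_mulVec, Matrix.transpose_smul, Matrix.smul_mulVec]
    simp only [Pi.sub_apply, Pi.smul_apply, smul_eq_mul]
    rw [PpiMatT_mulVec]
  rw [hexp] at hb
  have : (((1 - γ) • ((piMat x)ᵀ *ᵥ μ0)) : S × A → ℝ) p = (1 - γ) * (x p * μ0 p.1) := by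
    simp only [Pi.smul_apply, smul_eq_mul]; rw [piMatT_mulVec]
  rw [this] at hb
  ring_nf
  ring_nf at hb
  linarith [hb]

lemma xiMat_dOcc (s : S) :
    (xiMat *ᵥ dOcc P γ μ0 x) s
      = (1 - γ) * μ0 s + γ * ∑ q, P q s * dOcc P γ μ0 x q := by
  rw [xiMat_mulVec]
  have : ∀ a : A, dOcc P γ μ0 x (s, a)
      = x (s, a) * ((1 - γ) * μ0 s + γ * ∑ q, P q s * dOcc P γ μ0 x q) :=
    fun a => dOcc_entry hP hγ0 hγ1 hx (s, a)
  rw [Finset.sum_congr rfl fun a _ => this a, ← Finset.sum_mul, hx.2 s, one_mul]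

end bal

lemma piMat_add (x y : S × A → ℝ) : piMat (x + y) = piMat x + piMat y := by
  ext s p; simp only [piMat, Matrix.of_apply, Matrix.add_apply, Pi.add_apply]
  split <;> simp

lemma piMat_smul (c : ℝ) (x : S × A → ℝ) : piMat (c • x) = c • piMat x := by
  ext s p; simp only [piMat, Matrix.of_apply, Matrix.smul_apply, Pi.smul_apply, smul_eq_mul]
  split <;> simp

variable (S A) in
/-- `y ↦ (γ • (P * piMat y))ᵀ` as a continuous linear map. -/
def psiC (P : Matrix (S × A) S ℝ) (γ : ℝ) :
    ((S × A) → ℝ) →L[ℝ] Matrix (S × A) (S × A) ℝ :=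
  LinearMap.toContinuousLinearMap
    { toFun := fun y => (γ • (P * piMat y))ᵀ
      map_add' := fun x y => by show (γ • (P * piMat (x + y)))ᵀ = _; rw [piMat_add, Matrix.mul_add, smul_add, Matrix.transpose_add]
      map_smul' := fun c x => by
        show (γ • (P * piMat (c • x)))ᵀ = _
        rw [piMat_smul, Matrix.mul_smul, smul_comm, Matrix.transpose_smul]; rfl }

variable (S A) in
/-- `y ↦ (piMat y)ᵀ *ᵥ μ0` as a continuous linear map. -/
def uC (μ0 : S → ℝ) : ((S × A) → ℝ) →L[ℝ] ((S × A) → ℝ) :=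
  LinearMap.toContinuousLinearMap
    { toFun := fun y => (piMat y)ᵀ *ᵥ μ0
      map_add' := fun x y => by show (piMat (x + y))ᵀ *ᵥ μ0 = _; rw [piMat_add, Matrix.transpose_add, Matrix.add_mulVec]
      map_smul' := fun c x => by
        show (piMat (c • x))ᵀ *ᵥ μ0 = _
        rw [piMat_smul, Matrix.transpose_smul, Matrix.smul_mulVec]; rfl }

variable (S A) in
/-- Matrix-vector multiplication as a continuous bilinear map. -/
def mulVecCLM : Matrix (S × A) (S × A) ℝ →L[ℝ] ((S × A) → ℝ) →L[ℝ] ((S × A) → ℝ) :=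
  LinearMap.toContinuousLinearMap
    { toFun := fun M => LinearMap.toContinuousLinearMap M.mulVecLin
      map_add' := fun M N => by
        ext v p
        simp [Matrix.add_mulVec]
      map_smul' := fun c M => by
        ext v p
        simp [Matrix.smul_mulVec] }

@[simp] lemma psiC_apply (P : Matrix (S × A) S ℝ) (γ : ℝ) (y : (S × A) → ℝ) :
    psiC S A P γ y = (γ • (P * piMat y))ᵀ := rfl

@[simp] lemma uC_apply (μ0 : S → ℝ) (y : (S × A) → ℝ) :
    uC S A μ0 y = (piMat y)ᵀ *ᵥ μ0 := rfl

@[simp] lemma mulVecCLM_apply (M : Matrix (S × A) (S × A) ℝ) (v : (S × A) → ℝ) :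
    mulVecCLM S A M v = M *ᵥ v := rfl

section main
variable {P : Matrix (S × A) S ℝ} (hP : IsStochasticMat P)
    {γ : ℝ} (hγ0 : 0 ≤ γ) (hγ1 : γ < 1) {μ0 : S → ℝ}
    {n : ℕ} {f : (Fin n → ℝ) → S × A → ℝ} (hf : ∀ t, IsPolicy (f t))
    {θ : Fin n → ℝ} {D : (Fin n → ℝ) →L[ℝ] ((S × A) → ℝ)} (hD : HasFDerivAt f D θ)

include hP hγ0 hγ1 hf hD

lemma main_hasFDerivAt (μ0 : S → ℝ) :
    ∃ D' : (Fin n → ℝ) →L[ℝ] ((S × A) → ℝ),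
      HasFDerivAt (fun t => dOcc P γ μ0 (f t)) D' θ ∧
      ∀ v p, D' v p = ∑ q, D v q * (xiMatᵀ *ᵥ (xiMat *ᵥ dOcc P γ μ0 (f θ))) q
          * (psiMat P γ (f θ))⁻¹ q p := by
  have hx := hf θ
  have hunit := isUnit_psiMat hP hγ0 hγ1 hx
  have hdet : IsUnit (psiMat P γ (f θ)).det := (Matrix.isUnit_iff_isUnit_det _).1 hunit
  have hdetT : IsUnit ((psiMat P γ (f θ))ᵀ).det := by rwa [Matrix.det_transpose]
  have hunitT : IsUnit ((psiMat P γ (f θ))ᵀ) := (Matrix.isUnit_iff_isUnit_det _).2 hdetT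
  have hψfun : ∀ t, (psiMat P γ (f t))ᵀ
      = (1 : Matrix (S × A) (S × A) ℝ) - psiC S A P γ (f t) := by
    intro t
    rw [psiMat, Matrix.transpose_sub, Matrix.transpose_one, psiC_apply]
  have hM : HasFDerivAt (fun t => (psiMat P γ (f t))ᵀ) (-((psiC S A P γ).comp D)) θ := by
    simp only [hψfun]
    exact ((psiC S A P γ).hasFDerivAt.comp θ hD).const_sub 1
  have hNinv := hasFDerivAt_ringInverse (𝕜 := ℝ) hunitT.unit
  rw [IsUnit.unit_spec] at hNinv
  have hN : HasFDerivAt (fun t => Ring.inverse ((psiMat P γ (f t))ᵀ))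
      ((-(ContinuousLinearMap.mulLeftRight ℝ _ ↑hunitT.unit⁻¹ ↑hunitT.unit⁻¹)).comp
        (-((psiC S A P γ).comp D))) θ := by have h2 := hNinv.comp (x := θ) hM; exact h2
  have hu : HasFDerivAt (fun t => (piMat (f t))ᵀ *ᵥ μ0) ((uC S A μ0).comp D) θ :=
    (uC S A μ0).hasFDerivAt.comp θ hD
  have hbil := (mulVecCLM S A).hasFDerivAt_of_bilinear hN hu
  have hfinal : HasFDerivAt (fun t => (1 - γ) • mulVecCLM S A (Ring.inverse ((psiMat P γ (f t))ᵀ)) ((piMat (f t))ᵀ *ᵥ μ0)) _ θ := hbil.const_smul (1 - γ)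
  have hfun : (fun t => dOcc P γ μ0 (f t))
      = fun t => (1 - γ) • mulVecCLM S A (Ring.inverse ((psiMat P γ (f t))ᵀ))
          ((piMat (f t))ᵀ *ᵥ μ0) := by
    funext t
    rw [dOcc, mulVecCLM_apply, Matrix.nonsing_inv_eq_ringInverse]
  rw [← hfun] at hfinal
  refine ⟨_, hfinal, ?_⟩
  intro v p
  -- notation
  set Ai : Matrix (S × A) (S × A) ℝ := ((psiMat P γ (f θ))ᵀ)⁻¹ with hAidef
  have hAi : (↑hunitT.unit⁻¹ : Matrix (S × A) (S × A) ℝ) = Ai := by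
    rw [Matrix.coe_units_inv, IsUnit.unit_spec]
  have hNθ : Ring.inverse ((psiMat P γ (f θ))ᵀ) = Ai := (Matrix.nonsing_inv_eq_ringInverse _).symm
  set y : (S × A) → ℝ := D v with hydef
  set d : (S × A) → ℝ := dOcc P γ μ0 (f θ) with hddef
  set uθ : (S × A) → ℝ := (piMat (f θ))ᵀ *ᵥ μ0 with hudef
  -- evaluate the derivative
  simp only [ContinuousLinearMap.smul_apply, ContinuousLinearMap.add_apply,
    ContinuousLinearMap.precompR_apply, ContinuousLinearMap.precompL_apply,
    ContinuousLinearMap.comp_apply, ContinuousLinearMap.neg_apply,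
    ContinuousLinearMap.compL_apply, ContinuousLinearMap.coe_comp', Function.comp_apply,
    ContinuousLinearMap.mulLeftRight_apply, mulVecCLM_apply, uC_apply, psiC_apply,
    hAi, hNθ, mul_neg, neg_mul, neg_neg]
  show (1 - γ) • ((Ai *ᵥ ((piMat y)ᵀ *ᵥ μ0)) p + ((-(Ai * (-(γ • (P * piMat y))ᵀ) * Ai)) *ᵥ uθ) p) = _
  rw [mul_neg, neg_mul, neg_neg]
  -- now pure matrix algebra
  set z : (S × A) → ℝ := fun q => y q * (xiMat *ᵥ d) q.1 with hzdef
  have key : (1 - γ) • ((piMat y)ᵀ *ᵥ μ0) + (γ • (P * piMat y))ᵀ *ᵥ d = z := by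
    funext q
    have h2 : ((γ • (P * piMat y))ᵀ *ᵥ d) q = γ * (y q * ∑ r, P r q.1 * d r) := by
      rw [Matrix.transpose_smul, Matrix.smul_mulVec]
      simp only [Pi.smul_apply, smul_eq_mul]
      rw [PpiMatT_mulVec]
    simp only [Pi.add_apply, Pi.smul_apply, smul_eq_mul, hzdef, h2, piMatT_mulVec,
      xiMat_dOcc hP hγ0 hγ1 hx q.1, ← hddef]
    rw [hddef, xiMat_dOcc hP hγ0 hγ1 hx q.1]
    ring
  have lhs_eq : (1 - γ) • (Ai *ᵥ ((piMat y)ᵀ *ᵥ μ0) + (Ai * (γ • (P * piMat y))ᵀ * Ai) *ᵥ uθ)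
      = Ai *ᵥ z := by
    rw [← key]
    rw [← Matrix.mulVec_mulVec, ← Matrix.mulVec_mulVec, Matrix.mulVec_add, smul_add,
      ← Matrix.mulVec_smul, ← Matrix.mulVec_smul, ← Matrix.mulVec_smul]
    congr 1
    · rw [hddef, dOcc, ← hudef, ← hAidef]
      simp [Matrix.mulVec_smul]
  have hAiT : ∀ q, Ai p q = (psiMat P γ (f θ))⁻¹ q p := by
    intro q
    rw [hAidef, ← Matrix.transpose_nonsing_inv]
    rfl
  calc (1 - γ) • ((Ai *ᵥ ((piMat y)ᵀ *ᵥ μ0)) p + ((Ai * (γ • (P * piMat y))ᵀ * Ai) *ᵥ uθ) p)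
      = ((1 - γ) • (Ai *ᵥ ((piMat y)ᵀ *ᵥ μ0) + (Ai * (γ • (P * piMat y))ᵀ * Ai) *ᵥ uθ)) p := by
        simp
    _ = (Ai *ᵥ z) p := by rw [lhs_eq]
    _ = ∑ q, y q * (xiMatᵀ *ᵥ (xiMat *ᵥ d)) q * (psiMat P γ (f θ))⁻¹ q p := by
        rw [Matrix.mulVec, dotProduct]
        refine Finset.sum_congr rfl fun q _ => ?_
        rw [hAiT q, hzdef, xiMatT_mulVec]
        ring

end main


/-- stationary distribution derivative: `θ ↦ d_θ` is differentiable and its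
Jacobian is `Υ = H_θ Δ(Ξᵀ d_{S,θ}) Ψ_θ⁻¹`, where `H_θ` is the Jacobian of `θ ↦ π_θ`. -/
theorem stationary_distribution_derivative
    (P : Matrix (S × A) S ℝ) (hP : IsStochasticMat P)
    (γ : ℝ) (hγ0 : 0 ≤ γ) (hγ1 : γ < 1)
    (μ0 : S → ℝ) (hμ0 : IsProbVec μ0)
    {n : ℕ} (π : (Fin n → ℝ) → S × A → ℝ)
    (hpol : ∀ θ, IsPolicy (π θ)) (hdiff : Differentiable ℝ π) :
    Differentiable ℝ (fun θ => dOcc P γ μ0 (π θ)) ∧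
    ∀ (θ : Fin n → ℝ) (i : Fin n) (p : S × A),
      fderiv ℝ (fun t => dOcc P γ μ0 (π t)) θ (Pi.single i 1) p
        = (((Matrix.of fun j p' => fderiv ℝ π θ (Pi.single j 1) p')
            * (Matrix.diagonal (xiMatᵀ *ᵥ (xiMat *ᵥ dOcc P γ μ0 (π θ))) : Matrix (S × A) (S × A) ℝ)
            * (psiMat P γ (π θ))⁻¹ : Matrix (Fin n) (S × A) ℝ)) i p := by
  constructor
  · intro θ
    obtain ⟨D', hD', -⟩ := main_hasFDerivAt hP hγ0 hγ1 hpol (hdiff θ).hasFDerivAt μ0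
    exact hD'.differentiableAt
  · intro θ i p
    obtain ⟨D', hD', hval⟩ := main_hasFDerivAt hP hγ0 hγ1 hpol (hdiff θ).hasFDerivAt μ0
    rw [hD'.fderiv, hval]
    rw [Matrix.mul_apply]
    refine Finset.sum_congr rfl fun q _ => ?_
    rw [Matrix.mul_diagonal]
    simp only [Matrix.of_apply]
end
end

section
/- (Primal–dual identity for the entropy-regularized objective.) Let π be a policy with π(s,a) > 0 for all (s,a), let ℓ ∈ ℝ^{S×A} be the vector ℓ(s,a) := log π(s,a), and let q̃ := Ψ(π)⁻¹ (r − γ P Π(π) ℓ) be the soft state–action value (so Ψ(π) q̃ = r − γPΠ(π)ℓ, i.e., q̃ = r + γPΠ(π)(q̃ − ℓ)). Then d(π)ᵀ (r − ℓ) = (1−γ) μ0ᵀ Π(π) (q̃ − ℓ). -/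
open Matrix

noncomputable section

variable {S A : Type*} [Fintype S] [Fintype A] [DecidableEq S] [DecidableEq A]
  [Nonempty S] [Nonempty A]

-- Ψ is a unit
lemma psiMat_isUnit (P : Matrix (S × A) S ℝ) (hP : IsStochasticMat P)
    (γ : ℝ) (hγ0 : 0 ≤ γ) (hγ1 : γ < 1)
    (x : S × A → ℝ) (hx : IsPolicy x) : IsUnit (psiMat P γ x) := by
  letI := Matrix.linftyOpNormedAddCommGroup (m := S × A) (n := S × A) (α := ℝ)
  letI := Matrix.linftyOpNormedRing (n := S × A) (α := ℝ)
  letI := Matrix.linftyOpNormedSpace (R := ℝ) (m := S × A) (n := S × A) (α := ℝ)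
  haveI : CompleteSpace (Matrix (S × A) (S × A) ℝ) :=
    FiniteDimensional.complete ℝ _
  have hnorm : ‖P * piMat x‖ ≤ 1 := by
    rw [Matrix.linfty_opNorm_def]
    rw [← NNReal.coe_one, NNReal.coe_le_coe]
    apply Finset.sup_le
    intro p _
    have hrow : ∀ q : S × A, (P * piMat x) p q = P p q.1 * x q := by
      intro q
      simp only [Matrix.mul_apply, piMat, Matrix.of_apply]
      rw [Finset.sum_eq_single q.1]
      · simp
      · intro b _ hb; simp [Ne.symm hb]
      · simp
    have : ∀ q : S × A, (‖(P * piMat x) p q‖₊ : ℝ) = P p q.1 * x q := by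
      intro q
      rw [coe_nnnorm, hrow, Real.norm_of_nonneg (mul_nonneg (hP.1 p q.1) (hx.1 q))]
    refine le_of_eq ?_
    refine NNReal.coe_injective ?_
    rw [NNReal.coe_one]
    calc ((∑ q : S × A, ‖(P * piMat x) p q‖₊ : NNReal) : ℝ)
        = ∑ q : S × A, P p q.1 * x q := by
          rw [NNReal.coe_sum]; exact Finset.sum_congr rfl fun q _ => this q
      _ = ∑ s : S, ∑ a : A, P p s * x (s, a) := by rw [Fintype.sum_prod_type]
      _ = ∑ s : S, P p s := by
          refine Finset.sum_congr rfl fun s _ => ?_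
          rw [← Finset.mul_sum, hx.2 s, mul_one]
      _ = 1 := hP.2 p
  have h : ‖γ • (P * piMat x)‖ < 1 := by
    rw [norm_smul, Real.norm_of_nonneg hγ0]
    calc γ * ‖P * piMat x‖ ≤ γ * 1 := by
          exact mul_le_mul_of_nonneg_left hnorm hγ0
      _ = γ := mul_one γ
      _ < 1 := hγ1
  exact (Units.oneSub _ h).isUnit

/-- primal–dual identity for the entropy-regularized objective:
with `ℓ = log π` and the soft value `q̃ = Ψ(π)⁻¹(r - γPΠ(π)ℓ)`,
`d(π)ᵀ(r - ℓ) = (1-γ) μ0ᵀ Π(π) (q̃ - ℓ)`. -/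
theorem soft_primal_dual_identity
    (P : Matrix (S × A) S ℝ) (hP : IsStochasticMat P)
    (γ : ℝ) (hγ0 : 0 ≤ γ) (hγ1 : γ < 1)
    (r : S × A → ℝ) (μ0 : S → ℝ) (hμ0 : IsProbVec μ0)
    (x : S × A → ℝ) (hx : IsPolicy x) (hxpos : ∀ p : S × A, 0 < x p) :
    dOcc P γ μ0 x ⬝ᵥ (r - fun p => Real.log (x p))
      = (1 - γ) *
        (μ0 ⬝ᵥ (piMat x *ᵥ
          (((psiMat P γ x)⁻¹ *ᵥ
              (r - γ • ((P * piMat x) *ᵥ fun p => Real.log (x p))))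
            - fun p => Real.log (x p)))) := by
  set ℓ : S × A → ℝ := fun p => Real.log (x p) with hℓ
  set Ψ := psiMat P γ x with hΨ
  have hunit : IsUnit Ψ := psiMat_isUnit P hP γ hγ0 hγ1 x hx
  have hdet : IsUnit Ψ.det := (Matrix.isUnit_iff_isUnit_det Ψ).mp hunit
  -- key: Ψ⁻¹ *ᵥ (r - ℓ) = (Ψ⁻¹ *ᵥ (r - γ•(PΠ*ᵥℓ))) - ℓ
  have key : Ψ⁻¹ *ᵥ (r - ℓ)
      = (Ψ⁻¹ *ᵥ (r - γ • ((P * piMat x) *ᵥ ℓ))) - ℓ := by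
    have hΨℓ : Ψ *ᵥ ℓ = ℓ - γ • ((P * piMat x) *ᵥ ℓ) := by
      rw [hΨ, psiMat, Matrix.sub_mulVec, Matrix.one_mulVec, Matrix.smul_mulVec]
    have : r - ℓ = (r - γ • ((P * piMat x) *ᵥ ℓ)) - Ψ *ᵥ ℓ := by
      rw [hΨℓ]; abel
    rw [this, Matrix.mulVec_sub, Matrix.mulVec_mulVec, Matrix.nonsing_inv_mul _ hdet,
      Matrix.one_mulVec]
  -- dot product manipulation
  rw [dOcc, smul_dotProduct, ← hΨ, ← Matrix.transpose_nonsing_inv,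
    Matrix.mulVec_transpose, Matrix.mulVec_transpose, ← Matrix.dotProduct_mulVec,
    ← Matrix.dotProduct_mulVec, ← key, smul_eq_mul]
end
end
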